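/- arXiv:2202.05576 — 7 statements merged into one kernel-verified Lean document; each statement's English description precedes it below -/
import Mathlib

section
/- Jarzynski's equality for Markov chains: if X = (X_n)_{n=0}^N is a Markov chain on a finite state space whose initial distribution p_0 has non-zero entries and whose transition matrices are irreducible, then for any family of energies E of X and any β > 0, the expectation E[e^{-β(W(X) - ΔF)}] = 1, where W is the work and ΔF = F_N - F_0 is the free energy difference. -/
open Finset

lemma path_sum_aux {S : Type*} [Fintype S] [DecidableEq S] :
    ∀ (N : ℕ) (q : ℕ → S → ℝ) (g : ℕ → S → S → ℝ),
    (∀ n < N, ∀ b, ∑ a, q n a * g n a b = q (n + 1) b) →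
    ∑ x : Fin (N + 1) → S, q 0 (x 0) * ∏ n : Fin N, g n (x n.castSucc) (x n.succ)
      = ∑ b, q N b := by
  intro N
  induction N with
  | zero =>
    intro q g h
    rw [← Fintype.sum_equiv (Equiv.funUnique (Fin 1) S) _ (fun s => q 0 s)]
    · intro x; simp
  | succ N ih =>
    intro q g h
    have key := ih (fun n => q (n + 1)) (fun n => g (n + 1))
      (fun n hn b => h (n + 1) (by omega) b)
    rw [show q (N + 1) = (fun n => q (n + 1)) N from rfl, ← key]
    rw [← Fintype.sum_equiv (Fin.consEquiv (fun _ : Fin (N + 2) => S)) _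
      (fun x => q 0 (x 0) * ∏ n : Fin (N + 1), g n (x n.castSucc) (x n.succ)) (fun x => rfl)]
    rw [Fintype.sum_prod_type]
    rw [Finset.sum_comm]
    apply Finset.sum_congr rfl
    intro y _
    have : ∀ a : S,
        q 0 ((Fin.consEquiv (fun _ : Fin (N + 2) => S)) (a, y) 0) *
          ∏ n : Fin (N + 1), g n (((Fin.consEquiv (fun _ : Fin (N + 2) => S)) (a, y)) n.castSucc)
            (((Fin.consEquiv (fun _ : Fin (N + 2) => S)) (a, y)) n.succ)
        = (q 0 a * g 0 a (y 0)) * ∏ n : Fin N, g (n + 1) (y n.castSucc) (y n.succ) := by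
      intro a
      simp only [Fin.consEquiv_apply, Fin.prod_univ_succ, ← Fin.succ_castSucc,
        Fin.cons_zero, Fin.cons_succ, Fin.val_succ, Fin.val_zero, Fin.castSucc_zero]
      ring
    rw [Finset.sum_congr rfl (fun a _ => this a)]
    rw [← Finset.sum_mul, h 0 (by omega) (y 0)]

/-- Jarzynski's equality for Markov chains: if the initial distribution
p_0 has strictly positive entries and the transition matrices M_1,...,M_N are
irreducible (with stationary distributions p_n and associated energies E_n at inverse
temperature β), then the path expectation of e^{-β(W - ΔF)} equals 1. -/
theorem stmt_8 {S : Type*} [Fintype S] [DecidableEq S] [Nonempty S] (N : ℕ)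
    (β : ℝ) (hβ : 0 < β)
    (M : ℕ → Matrix S S ℝ) (p : ℕ → S → ℝ) (E : ℕ → S → ℝ)
    (hp0 : ∀ x, 0 < p 0 x) (hp0sum : ∑ x, p 0 x = 1)
    (hstoch : ∀ n, 1 ≤ n → n ≤ N → (∀ x y, 0 ≤ M n x y) ∧ ∀ y, ∑ x, M n x y = 1)
    (hirr : ∀ n, 1 ≤ n → n ≤ N → ∀ x y, ∃ m : ℕ, 1 ≤ m ∧ 0 < ((M n) ^ m) x y)
    (hstat : ∀ n, 1 ≤ n → n ≤ N → ∀ x, ∑ y, M n x y * p n y = p n x)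
    (hE : ∀ n ≤ N, ∀ x, p n x = Real.exp (-β * E n x) / ∑ y, Real.exp (-β * E n y)) :
    ∑ x : Fin (N + 1) → S,
      (p 0 (x 0) * ∏ n : Fin N, M ((n : ℕ) + 1) (x n.succ) (x n.castSucc)) *
        Real.exp (-β * ((∑ n : Fin N, (E ((n : ℕ) + 1) (x n.castSucc) - E (n : ℕ) (x n.castSucc)))
          - ((-(1 / β) * Real.log (∑ y, Real.exp (-β * E N y)))
              - (-(1 / β) * Real.log (∑ y, Real.exp (-β * E 0 y)))))) = 1 := by
  set Z : ℕ → ℝ := fun n => ∑ y, Real.exp (-β * E n y) with hZ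
  have hZpos : ∀ n, 0 < Z n := fun n =>
    Finset.sum_pos (fun y _ => Real.exp_pos _) univ_nonempty
  have hppos : ∀ n ≤ N, ∀ x, 0 < p n x := by
    intro n hn x
    rw [hE n hn x]
    exact div_pos (Real.exp_pos _) (hZpos n)
  have hexp : ∀ n ≤ N, ∀ x, Real.exp (-β * E n x) = p n x * Z n := by
    intro n hn x
    rw [hE n hn x, div_mul_cancel₀ _ (hZpos n).ne']
  -- telescoping product of Z
  have htel : ∀ m : ℕ, ∏ n : Fin m, (Z (n + 1) / Z n) = Z m / Z 0 := by
    intro m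
    induction m with
    | zero => simp [eq_comm, div_self (hZpos 0).ne']
    | succ m ihm =>
      rw [Fin.prod_univ_castSucc]
      simp only [Fin.coe_castSucc, Fin.val_last]
      rw [ihm, div_mul_div_comm, mul_comm (Z m), mul_div_mul_right _ _ (hZpos m).ne']
  -- pointwise rewriting of the summand
  have hpt : ∀ x : Fin (N + 1) → S,
      (p 0 (x 0) * ∏ n : Fin N, M ((n : ℕ) + 1) (x n.succ) (x n.castSucc)) *
        Real.exp (-β * ((∑ n : Fin N, (E ((n : ℕ) + 1) (x n.castSucc) - E (n : ℕ) (x n.castSucc)))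
          - ((-(1 / β) * Real.log (Z N)) - (-(1 / β) * Real.log (Z 0)))))
      = p 0 (x 0) * ∏ n : Fin N,
          (M ((n : ℕ) + 1) (x n.succ) (x n.castSucc) * p ((n : ℕ) + 1) (x n.castSucc)
            / p (n : ℕ) (x n.castSucc)) := by
    intro x
    have hexpand : Real.exp (-β * ((∑ n : Fin N, (E ((n : ℕ) + 1) (x n.castSucc) - E (n : ℕ) (x n.castSucc)))
          - ((-(1 / β) * Real.log (Z N)) - (-(1 / β) * Real.log (Z 0)))))
        = (∏ n : Fin N, Real.exp (-β * (E ((n : ℕ) + 1) (x n.castSucc) - E (n : ℕ) (x n.castSucc))))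
            * (Z 0 / Z N) := by
      rw [show -β * ((∑ n : Fin N, (E ((n : ℕ) + 1) (x n.castSucc) - E (n : ℕ) (x n.castSucc)))
          - ((-(1 / β) * Real.log (Z N)) - (-(1 / β) * Real.log (Z 0))))
        = (∑ n : Fin N, -β * (E ((n : ℕ) + 1) (x n.castSucc) - E (n : ℕ) (x n.castSucc)))
          + (Real.log (Z 0) - Real.log (Z N)) by
          rw [mul_sub, Finset.mul_sum]; field_simp; ring]
      rw [Real.exp_add, Real.exp_sum, Real.exp_sub, Real.exp_log (hZpos 0),
        Real.exp_log (hZpos N)]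
    rw [hexpand]
    have hterm : ∀ n : Fin N,
        Real.exp (-β * (E ((n : ℕ) + 1) (x n.castSucc) - E (n : ℕ) (x n.castSucc)))
        = (p ((n : ℕ) + 1) (x n.castSucc) / p (n : ℕ) (x n.castSucc)) * (Z ((n : ℕ) + 1) / Z (n : ℕ)) := by
      intro n
      have hn1 : (n : ℕ) + 1 ≤ N := n.2
      have hn0 : (n : ℕ) ≤ N := le_of_lt n.2
      rw [mul_sub, Real.exp_sub, hexp _ hn1, hexp _ hn0, div_mul_div_comm]
    rw [Finset.prod_congr rfl (fun n _ => hterm n), Finset.prod_mul_distrib, htel N]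
    have hcancel : Z N / Z 0 * (Z 0 / Z N) = 1 := by
      field_simp
      exact div_self (mul_pos (hZpos N) (hZpos 0)).ne'
    rw [mul_assoc (∏ n : Fin N, (p ((n : ℕ) + 1) (x n.castSucc) / p (n : ℕ) (x n.castSucc))),
      hcancel, mul_one, mul_assoc, ← Finset.prod_mul_distrib]
    congr 1
    exact Finset.prod_congr rfl fun n _ => (mul_div_assoc _ _ _).symm
  rw [show (∑ y, Real.exp (-β * E N y)) = Z N from rfl,
    show (∑ y, Real.exp (-β * E 0 y)) = Z 0 from rfl]
  rw [Finset.sum_congr rfl (fun x _ => hpt x)]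
  have := path_sum_aux N p
    (fun n a b => M (n + 1) b a * p (n + 1) a / p n a)
    (by
      intro n hn b
      have h1 : 1 ≤ n + 1 := by omega
      have h2 : n + 1 ≤ N := by omega
      have : ∀ a, p n a * (M (n + 1) b a * p (n + 1) a / p n a)
          = M (n + 1) b a * p (n + 1) a := by
        intro a
        rw [mul_div_assoc', mul_comm (p n a), mul_div_assoc,
          div_self (hppos n (by omega) a).ne', mul_one]
      rw [Finset.sum_congr rfl (fun a _ => this a)]
      exact hstat (n + 1) h1 h2 b)
  rw [show (∑ x : Fin (N + 1) → S, p 0 (x 0) * ∏ n : Fin N,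
      (M ((n : ℕ) + 1) (x n.succ) (x n.castSucc) * p ((n : ℕ) + 1) (x n.castSucc)
        / p (n : ℕ) (x n.castSucc)))
    = ∑ x : Fin (N + 1) → S, p 0 (x 0) * ∏ n : Fin N,
      (fun n a b => M (n + 1) b a * p (n + 1) a / p n a) (n : ℕ) (x n.castSucc) (x n.succ)
    from rfl, this]
  rw [Finset.sum_congr rfl (fun b _ => hE N le_rfl b)]
  rw [← Finset.sum_div, div_self (hZpos N).ne']
end

section
/- Second law for Markov chains: under the assumptions of Jarzynski's equality, the expected work is bounded below by the free energy difference: ΔF ≤ E[W(X)]. -/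
open Finset

lemma path_sum {S : Type*} [Fintype S] (N : ℕ) (K : ℕ → S → S → ℝ) (v : ℕ → S → ℝ)
    (h : ∀ n < N, ∀ a, ∑ b, K n a b * v n b = v (n + 1) a) :
    ∑ x : Fin (N + 1) → S, v 0 (x 0) * ∏ n : Fin N, K n (x n.succ) (x n.castSucc)
      = ∑ a, v N a := by
  induction N generalizing K v with
  | zero =>
    simp only [Finset.univ_eq_empty, Finset.prod_empty, mul_one]
    exact Fintype.sum_equiv (Equiv.funUnique (Fin 1) S) _ _ (fun x => rfl)
  | succ N ih =>
    rw [← (Fin.consEquiv (fun _ : Fin (N + 2) => S)).sum_comp]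
    rw [Fintype.sum_prod_type]
    have step : ∀ (x0 : S) (y : Fin (N + 1) → S),
        v 0 ((Fin.consEquiv (fun _ : Fin (N + 2) => S) (x0, y)) 0) *
          ∏ n : Fin (N + 1), K n ((Fin.consEquiv (fun _ : Fin (N + 2) => S) (x0, y)) n.succ)
            ((Fin.consEquiv (fun _ : Fin (N + 2) => S) (x0, y)) n.castSucc)
        = v 0 x0 * K 0 (y 0) x0 *
            ∏ n : Fin N, K (n + 1) (y n.succ) (y n.castSucc) := by
      intro x0 y
      rw [Fin.prod_univ_succ]
      have this2 : ∀ n : Fin N, (Fin.cons x0 y : Fin (N+2) → S) n.succ.castSucc = y n.castSucc := by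
        intro n
        rw [← Fin.succ_castSucc, Fin.cons_succ]
      simp only [Fin.consEquiv_apply, Fin.cons_zero, Fin.castSucc_zero, Fin.cons_succ,
        this2, Fin.val_succ, Fin.val_zero]
      ring
    simp only [step]
    rw [Finset.sum_comm]
    have key : ∀ y : Fin (N + 1) → S,
        ∑ x0, v 0 x0 * K 0 (y 0) x0 * ∏ n : Fin N, K (n + 1) (y n.succ) (y n.castSucc)
        = v 1 (y 0) * ∏ n : Fin N, K (n + 1) (y n.succ) (y n.castSucc) := by
      intro y
      rw [← Finset.sum_mul]
      congr 1
      rw [← h 0 (Nat.succ_pos N) (y 0)]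
      exact Finset.sum_congr rfl fun b _ => by ring
    simp only [key]
    exact ih (fun n => K (n + 1)) (fun n => v (n + 1))
      (fun n hn a => h (n + 1) (Nat.succ_lt_succ hn) a)
lemma path_sum_rev {S : Type*} [Fintype S] (N : ℕ) (K : ℕ → S → S → ℝ) (u : S → ℝ)
    (w : ℕ → S → ℝ)
    (h : ∀ n < N, ∀ b, ∑ a, K n a b * w (n + 1) a = w n b) :
    ∑ x : Fin (N + 1) → S,
        u (x 0) * (∏ n : Fin N, K n (x n.succ) (x n.castSucc)) * w N (x (Fin.last N))
      = ∑ b, u b * w 0 b := by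
  induction N generalizing w with
  | zero =>
    simp only [Finset.univ_eq_empty, Finset.prod_empty, mul_one]
    exact Fintype.sum_equiv (Equiv.funUnique (Fin 1) S) _ _ (fun x => rfl)
  | succ N ih =>
    rw [← (Fin.snocEquiv (fun _ : Fin (N + 2) => S)).sum_comp]
    rw [Fintype.sum_prod_type]
    have step : ∀ (a : S) (y : Fin (N + 1) → S),
        u ((Fin.snocEquiv (fun _ : Fin (N + 2) => S) (a, y)) 0) *
          (∏ n : Fin (N + 1), K n ((Fin.snocEquiv (fun _ : Fin (N + 2) => S) (a, y)) n.succ)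
            ((Fin.snocEquiv (fun _ : Fin (N + 2) => S) (a, y)) n.castSucc)) *
          w (N + 1) ((Fin.snocEquiv (fun _ : Fin (N + 2) => S) (a, y)) (Fin.last (N + 1)))
        = u (y 0) * (∏ n : Fin N, K n (y n.succ) (y n.castSucc)) *
            (K N a (y (Fin.last N)) * w (N + 1) a) := by
      intro a y
      rw [Fin.prod_univ_castSucc]
      have h1 : ∀ n : Fin N, (Fin.snoc y a : Fin (N+2) → S) n.castSucc.succ = y n.succ := by
        intro n
        rw [Fin.succ_castSucc, Fin.snoc_castSucc]
      have h2 : (Fin.snoc y a : Fin (N+2) → S) (Fin.last N).succ = a := by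
        rw [Fin.succ_last, Fin.snoc_last]
      have h3 : (Fin.snoc y a : Fin (N+2) → S) 0 = y 0 := by
        rw [← Fin.castSucc_zero, Fin.snoc_castSucc]
      simp only [Fin.snocEquiv_apply, Fin.snoc_castSucc, Fin.snoc_last, h1, h2, h3,
        Fin.coe_castSucc, Fin.val_last]
      ring
    simp only [step]
    rw [Finset.sum_comm]
    have key : ∀ y : Fin (N + 1) → S,
        ∑ a, u (y 0) * (∏ n : Fin N, K n (y n.succ) (y n.castSucc)) *
            (K N a (y (Fin.last N)) * w (N + 1) a)
        = u (y 0) * (∏ n : Fin N, K n (y n.succ) (y n.castSucc)) * w N (y (Fin.last N)) := by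
      intro y
      rw [← Finset.mul_sum]
      congr 1
      rw [← h N (Nat.lt_succ_self N) (y (Fin.last N))]
    simp only [key]
    exact ih w (fun n hn b => h n (Nat.lt_succ_of_lt hn) b)

/-- Second law for Markov chains: under the assumptions of Jarzynski's
equality, the expected work is bounded below by the free energy difference. -/
theorem stmt_9 {S : Type*} [Fintype S] [DecidableEq S] [Nonempty S] (N : ℕ)
    (β : ℝ) (hβ : 0 < β)
    (M : ℕ → Matrix S S ℝ) (p : ℕ → S → ℝ) (E : ℕ → S → ℝ)
    (hp0 : ∀ x, 0 < p 0 x) (hp0sum : ∑ x, p 0 x = 1)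
    (hstoch : ∀ n, 1 ≤ n → n ≤ N → (∀ x y, 0 ≤ M n x y) ∧ ∀ y, ∑ x, M n x y = 1)
    (hirr : ∀ n, 1 ≤ n → n ≤ N → ∀ x y, ∃ m : ℕ, 1 ≤ m ∧ 0 < ((M n) ^ m) x y)
    (hstat : ∀ n, 1 ≤ n → n ≤ N → ∀ x, ∑ y, M n x y * p n y = p n x)
    (hE : ∀ n ≤ N, ∀ x, p n x = Real.exp (-β * E n x) / ∑ y, Real.exp (-β * E n y)) :
    (-(1 / β) * Real.log (∑ y, Real.exp (-β * E N y)))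
        - (-(1 / β) * Real.log (∑ y, Real.exp (-β * E 0 y)))
      ≤ ∑ x : Fin (N + 1) → S,
          (p 0 (x 0) * ∏ n : Fin N, M ((n : ℕ) + 1) (x n.succ) (x n.castSucc)) *
            (∑ n : Fin N, (E ((n : ℕ) + 1) (x n.castSucc) - E (n : ℕ) (x n.castSucc))) := by
  set Z : ℕ → ℝ := fun n => ∑ y, Real.exp (-β * E n y) with hZdef
  have hZpos : ∀ n, 0 < Z n := fun n =>
    Finset.sum_pos (fun y _ => Real.exp_pos _) Finset.univ_nonempty
  set μ : (Fin (N + 1) → S) → ℝ :=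
    fun x => p 0 (x 0) * ∏ n : Fin N, M ((n : ℕ) + 1) (x n.succ) (x n.castSucc) with hμdef
  set W : (Fin (N + 1) → S) → ℝ :=
    fun x => ∑ n : Fin N, (E ((n : ℕ) + 1) (x n.castSucc) - E (n : ℕ) (x n.castSucc)) with hWdef
  show -(1 / β) * Real.log (Z N) - -(1 / β) * Real.log (Z 0) ≤ ∑ x, μ x * W x
  -- total mass of μ is 1
  have hμ1 : ∑ x : Fin (N + 1) → S, μ x = 1 := by
    have h' : ∀ n < N, ∀ b : S, ∑ a, M (n + 1) a b * (fun (_ : ℕ) (_ : S) => (1 : ℝ)) (n + 1) a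
        = (fun (_ : ℕ) (_ : S) => (1 : ℝ)) n b := by
      intro n hn b
      simp only [mul_one]
      exact (hstoch (n + 1) (by omega) (by omega)).2 b
    have := path_sum_rev N (fun n a b => M (n + 1) a b) (p 0)
      (fun _ _ => (1 : ℝ)) h'
    simp only [mul_one] at this
    rw [hμdef]
    rw [this, hp0sum]
  -- μ is nonnegative
  have hμnn : ∀ x : Fin (N + 1) → S, 0 ≤ μ x := by
    intro x
    exact mul_nonneg (hp0 (x 0)).le (Finset.prod_nonneg fun n _ =>
      (hstoch ((n : ℕ) + 1) (by omega) (by have := n.isLt; omega)).1 _ _)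
  -- Jarzynski equality
  have hJ : ∑ x : Fin (N + 1) → S, μ x * Real.exp (-β * W x) = Z N / Z 0 := by
    have h' : ∀ n < N, ∀ a : S,
        ∑ b, (M (n + 1) a b * Real.exp (-β * (E (n + 1) b - E n b))) *
            (Real.exp (-β * E n b) / Z 0)
          = Real.exp (-β * E (n + 1) a) / Z 0 := by
      intro n hn a
      have hpe : ∀ b, Real.exp (-β * E (n + 1) b) = p (n + 1) b * Z (n + 1) := by
        intro b
        rw [hE (n + 1) (by omega) b]
        exact (div_mul_cancel₀ _ (hZpos (n + 1)).ne').symm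
      have step1 : ∀ b, (M (n + 1) a b * Real.exp (-β * (E (n + 1) b - E n b))) *
          (Real.exp (-β * E n b) / Z 0)
          = M (n + 1) a b * p (n + 1) b * (Z (n + 1) / Z 0) := by
        intro b
        have he : Real.exp (-β * (E (n + 1) b - E n b)) * Real.exp (-β * E n b)
            = p (n + 1) b * Z (n + 1) := by
          rw [← Real.exp_add, show -β * (E (n + 1) b - E n b) + -β * E n b
            = -β * E (n + 1) b by ring, hpe]
        calc (M (n + 1) a b * Real.exp (-β * (E (n + 1) b - E n b))) *
            (Real.exp (-β * E n b) / Z 0)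
            = M (n + 1) a b * (Real.exp (-β * (E (n + 1) b - E n b)) *
                Real.exp (-β * E n b)) / Z 0 := by ring
          _ = M (n + 1) a b * (p (n + 1) b * Z (n + 1)) / Z 0 := by rw [he]
          _ = M (n + 1) a b * p (n + 1) b * (Z (n + 1) / Z 0) := by ring
      rw [Finset.sum_congr rfl fun b _ => step1 b, ← Finset.sum_mul,
        hstat (n + 1) (by omega) (by omega) a,
        show p (n + 1) a * (Z (n + 1) / Z 0) = p (n + 1) a * Z (n + 1) / Z 0 by ring,
        ← hpe a]
    have := path_sum N
      (fun n a b => M (n + 1) a b * Real.exp (-β * (E (n + 1) b - E n b)))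
      (fun n x => Real.exp (-β * E n x) / Z 0) h'
    rw [← Finset.sum_div] at this
    rw [← this]
    refine Finset.sum_congr rfl fun x _ => ?_
    show μ x * Real.exp (-β * W x)
        = Real.exp (-β * E 0 (x 0)) / (∑ y, Real.exp (-β * E 0 y)) *
          ∏ n : Fin N, M ((n : ℕ) + 1) (x n.succ) (x n.castSucc) *
            Real.exp (-β * (E ((n : ℕ) + 1) (x n.castSucc) - E (n : ℕ) (x n.castSucc)))
    have hsplit : ∏ n : Fin N, M ((n : ℕ) + 1) (x n.succ) (x n.castSucc) *
        Real.exp (-β * (E ((n : ℕ) + 1) (x n.castSucc) - E (n : ℕ) (x n.castSucc)))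
        = (∏ n : Fin N, M ((n : ℕ) + 1) (x n.succ) (x n.castSucc)) *
          Real.exp (-β * W x) := by
      rw [Finset.prod_mul_distrib]
      congr 1
      rw [hWdef, Finset.mul_sum, Real.exp_sum]
    rw [hsplit, ← hE 0 (Nat.zero_le N) (x 0), hμdef]
    ring
  -- pointwise bound from convexity (exp x ≥ 1 + x)
  set L : ℝ := Real.log (Z N) - Real.log (Z 0) with hLdef
  have hpt : ∀ x : Fin (N + 1) → S,
      μ x * (1 - β * W x - L) ≤ μ x * (Real.exp (-β * W x) * (Z 0 / Z N)) := by
    intro x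
    refine mul_le_mul_of_nonneg_left ?_ (hμnn x)
    have he : Real.exp (-β * W x - L) = Real.exp (-β * W x) * (Z 0 / Z N) := by
      rw [Real.exp_sub, hLdef, Real.exp_sub, Real.exp_log (hZpos N),
        Real.exp_log (hZpos 0)]
      field_simp
    have := Real.add_one_le_exp (-β * W x - L)
    rw [he] at this
    linarith
  have hsum : ∑ x : Fin (N + 1) → S, μ x * (1 - β * W x - L)
      ≤ ∑ x : Fin (N + 1) → S, μ x * (Real.exp (-β * W x) * (Z 0 / Z N)) :=
    Finset.sum_le_sum fun x _ => hpt x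
  have hlhs : ∑ x : Fin (N + 1) → S, μ x * (1 - β * W x - L)
      = (∑ x : Fin (N + 1) → S, μ x) - β * (∑ x : Fin (N + 1) → S, μ x * W x)
        - L * (∑ x : Fin (N + 1) → S, μ x) := by
    rw [Finset.mul_sum, Finset.mul_sum, ← Finset.sum_sub_distrib, ← Finset.sum_sub_distrib]
    exact Finset.sum_congr rfl fun x _ => by ring
  have hrhs : ∑ x : Fin (N + 1) → S, μ x * (Real.exp (-β * W x) * (Z 0 / Z N)) = 1 := by
    have : ∑ x : Fin (N + 1) → S, μ x * (Real.exp (-β * W x) * (Z 0 / Z N))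
        = (∑ x : Fin (N + 1) → S, μ x * Real.exp (-β * W x)) * (Z 0 / Z N) := by
      rw [Finset.sum_mul]
      exact Finset.sum_congr rfl fun x _ => by ring
    rw [this, hJ]
    field_simp
    exact div_self (mul_pos (hZpos N) (hZpos 0)).ne'
  rw [hlhs, hrhs, hμ1] at hsum
  -- conclude
  have hkey : -L ≤ β * (∑ x : Fin (N + 1) → S, μ x * W x) := by linarith
  have : -(1 / β) * Real.log (Z N) - -(1 / β) * Real.log (Z 0) = -L / β := by
    rw [hLdef]; field_simp; ring
  rw [this, div_le_iff₀ hβ]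
  linarith
end

section
/- Existence part of the detailed fluctuation relation: if X = (X_n)_{n=0}^N is a Markov chain on finite S with initial distribution p_0 having non-zero entries and irreducible transition matrices (M_n), then the Markov chain Y with initial distribution p_N and transition matrices M̂_{n+1} with (M̂_{n+1})_{xy} = (p_{N-n}(x)/p_{N-n}(y))(M_{N-n})_{yx} satisfies, for every realization x = (x_0,...,x_N): P(X_1=x_1,...,X_N=x_N | X_0=x_0) = P(Y_1=x_{N-1},...,Y_N=x_0 | Y_0=x_N) · e^{-βQ(x)}, where Q is the heat. -/
open Finset

/-- Existence part of the detailed fluctuation relation: the reversed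
chain Y (initial distribution p_N, transition matrices
(M̂_{n+1})_{xy} = (p_{N-n}(x)/p_{N-n}(y))(M_{N-n})_{yx}) satisfies, for every
realization x, P(X_1=x_1,...,X_N=x_N | X_0=x_0)
= P(Y_1=x_{N-1},...,Y_N=x_0 | Y_0=x_N) · e^{-βQ(x)}. -/
theorem stmt_10 {S : Type*} [Fintype S] [Nonempty S] (N : ℕ)
    (β : ℝ) (hβ : 0 < β)
    (M : ℕ → Matrix S S ℝ) (p : ℕ → S → ℝ) (E : ℕ → S → ℝ)
    (hstoch : ∀ n, 1 ≤ n → n ≤ N → (∀ a b, 0 ≤ M n a b) ∧ ∀ b, ∑ a, M n a b = 1)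
    (hstat : ∀ n, 1 ≤ n → n ≤ N → ∀ a, ∑ b, M n a b * p n b = p n a)
    (hpos : ∀ n, 1 ≤ n → n ≤ N → ∀ a, 0 < p n a)
    (hE : ∀ n, 1 ≤ n → n ≤ N → ∀ a,
      p n a = Real.exp (-β * E n a) / ∑ b, Real.exp (-β * E n b)) :
    ∀ x : ℕ → S,
      (∏ n ∈ Finset.range N, M (n + 1) (x (n + 1)) (x n))
        = (∏ n ∈ Finset.range N,
            (p (N - n) (x (N - (n + 1))) / p (N - n) (x (N - n))
              * M (N - n) (x (N - n)) (x (N - (n + 1)))))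
          * Real.exp (-β * ∑ n ∈ Finset.range N, (E (n + 1) (x (n + 1)) - E (n + 1) (x n))) := by
  intro x
  have key : ∀ n, 1 ≤ n → n ≤ N → ∀ a b : S,
      M n b a = p n a / p n b * M n b a
        * Real.exp (-β * (E n b - E n a)) := by
    intro n h1 h2 a b
    have hZ : (0:ℝ) < ∑ c, Real.exp (-β * E n c) :=
      Finset.sum_pos (fun c _ => Real.exp_pos _) Finset.univ_nonempty
    rw [hE n h1 h2 a, hE n h1 h2 b]
    rw [show (Real.exp (-β * E n a) / ∑ c, Real.exp (-β * E n c))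
          / (Real.exp (-β * E n b) / ∑ c, Real.exp (-β * E n c))
        = Real.exp (-β * E n a - -β * E n b) by
      rw [Real.exp_sub]; field_simp]
    rw [mul_comm _ (M n b a), mul_assoc, ← Real.exp_add,
      show (-β * E n a - -β * E n b) + -β * (E n b - E n a) = 0 by ring,
      Real.exp_zero, mul_one]
  have hprod : (∏ n ∈ Finset.range N,
        (p (N - n) (x (N - (n + 1))) / p (N - n) (x (N - n))
          * M (N - n) (x (N - n)) (x (N - (n + 1)))))
      = ∏ n ∈ Finset.range N,
          (p (n + 1) (x n) / p (n + 1) (x (n + 1)) * M (n + 1) (x (n + 1)) (x n)) := by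
    rw [← Finset.prod_range_reflect]
    apply Finset.prod_congr rfl
    intro j hj
    simp only [Finset.mem_range] at hj
    have h1 : N - (N - 1 - j) = j + 1 := by omega
    have h2 : N - (N - 1 - j + 1) = j := by omega
    rw [h1, h2]
  rw [hprod, Finset.mul_sum, Real.exp_sum, ← Finset.prod_mul_distrib]
  apply Finset.prod_congr rfl
  intro n hn
  simp only [Finset.mem_range] at hn
  exact key (n + 1) (by omega) (by omega) (x n) (x (n + 1))
end

section
/- Detailed balance characterizes microscopic reversibility: if X = (X_n)_{n=0}^N is a Markov chain on finite S with positive initial distribution and irreducible transition matrices (M_n), then each M_n satisfies detailed balance (with respect to its stationary distribution p_n) if and only if X is microscopically reversible, i.e., the time reversal of X (the Markov chain with initial distribution p_N and transition matrices (M_{N-(n-1)})_{n=1}^N) satisfies the relation P(X_1=x_1,...,X_N=x_N|X_0=x_0) = P(Y_1=x_{N-1},...,Y_N=x_0|Y_0=x_N) e^{-βQ(x)} for all realizations x. -/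
open Finset

lemma strip_lemma {S : Type*} [Fintype S] [DecidableEq S] [Nonempty S] :
    ∀ (L : ℕ) (D : ℕ → S → S → ℝ) (q : ℕ → S → ℝ),
    (∀ j, j < L → ∀ w, 0 < q j w) →
    (∀ j, j < L → ∀ w, ∑ u, D j u w = q j w) →
    (∀ j, j < L → ∀ w, ∑ v, D j w v = q j w) →
    (∀ x : ℕ → S, ∏ j ∈ range L, D j (x j) (x (j+1))
        = ∏ j ∈ range L, D j (x (j+1)) (x j)) →
    ∀ j, j < L → ∀ u v, D j u v = D j v u := by
  intro L
  induction L with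
  | zero => intro D q _ _ _ _ j hj; omega
  | succ L IH =>
    intro D q hq hrow hcol hid j hj u v
    -- strip last step: identity of length L
    have hidL : ∀ x : ℕ → S, ∏ j ∈ range L, D j (x j) (x (j+1))
        = ∏ j ∈ range L, D j (x (j+1)) (x j) := by
      intro x
      set z : S → ℕ → S := fun w k => if k = L + 1 then w else x k with hz
      have hz1 : ∀ w k, k ≠ L + 1 → z w k = x k := by
        intro w k hk; simp [hz, hk]
      have hz2 : ∀ w, z w (L+1) = w := by intro w; simp [hz]
      have key : (∏ j ∈ range L, D j (x j) (x (j+1))) * q L (x L)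
          = (∏ j ∈ range L, D j (x (j+1)) (x j)) * q L (x L) := by
        calc (∏ j ∈ range L, D j (x j) (x (j+1))) * q L (x L)
            = ∑ w, (∏ j ∈ range L, D j (x j) (x (j+1))) * D L (x L) w := by
              rw [← Finset.mul_sum, hcol L (by omega)]
          _ = ∑ w, ∏ j ∈ range (L+1), D j (z w j) (z w (j+1)) := by
              refine Finset.sum_congr rfl fun w _ => ?_
              rw [Finset.prod_range_succ]
              congr 1
              · refine Finset.prod_congr rfl fun i hi => ?_
                simp only [Finset.mem_range] at hi
                rw [hz1 w i (by omega), hz1 w (i+1) (by omega)]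
              · rw [hz1 w L (by omega), hz2]
          _ = ∑ w, ∏ j ∈ range (L+1), D j (z w (j+1)) (z w j) :=
              Finset.sum_congr rfl fun w _ => hid (z w)
          _ = ∑ w, (∏ j ∈ range L, D j (x (j+1)) (x j)) * D L w (x L) := by
              refine Finset.sum_congr rfl fun w _ => ?_
              rw [Finset.prod_range_succ]
              congr 1
              · refine Finset.prod_congr rfl fun i hi => ?_
                simp only [Finset.mem_range] at hi
                rw [hz1 w i (by omega), hz1 w (i+1) (by omega)]
              · rw [hz1 w L (by omega), hz2]
          _ = (∏ j ∈ range L, D j (x (j+1)) (x j)) * q L (x L) := by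
              rw [← Finset.mul_sum, hrow L (by omega)]
      exact mul_right_cancel₀ (ne_of_gt (hq L (by omega) (x L))) key
    by_cases hjL : j < L
    · exact IH D q (fun j h => hq j (by omega)) (fun j h => hrow j (by omega))
        (fun j h => hcol j (by omega)) hidL j hjL u v
    · have hjeq : j = L := by omega
      rw [hjeq]
      rcases Nat.eq_zero_or_pos L with hL0 | hLpos
      · subst hL0
        have h := hid (fun k => if k = 0 then u else v)
        simpa using h
      · -- strip first step
        have hid' : ∀ x : ℕ → S, ∏ j ∈ range L, D (j+1) (x j) (x (j+1))
            = ∏ j ∈ range L, D (j+1) (x (j+1)) (x j) := by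
          intro x
          set z : S → ℕ → S := fun w k => if k = 0 then w else x (k - 1) with hz
          have hz1 : ∀ w k, z w (k+1) = x k := by intro w k; simp [hz]
          have hz2 : ∀ w, z w 0 = w := by intro w; simp [hz]
          have key : q 0 (x 0) * (∏ j ∈ range L, D (j+1) (x j) (x (j+1)))
              = q 0 (x 0) * (∏ j ∈ range L, D (j+1) (x (j+1)) (x j)) := by
            calc q 0 (x 0) * (∏ j ∈ range L, D (j+1) (x j) (x (j+1)))
                = ∑ w, D 0 w (x 0) * ∏ j ∈ range L, D (j+1) (x j) (x (j+1)) := by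
                  rw [← Finset.sum_mul, hrow 0 (by omega)]
              _ = ∑ w, ∏ j ∈ range (L+1), D j (z w j) (z w (j+1)) := by
                  refine Finset.sum_congr rfl fun w _ => ?_
                  rw [Finset.prod_range_succ']
                  simp only [hz1, hz2]
                  ring
              _ = ∑ w, ∏ j ∈ range (L+1), D j (z w (j+1)) (z w j) :=
                  Finset.sum_congr rfl fun w _ => hid (z w)
              _ = ∑ w, D 0 (x 0) w * ∏ j ∈ range L, D (j+1) (x (j+1)) (x j) := by
                  refine Finset.sum_congr rfl fun w _ => ?_
                  rw [Finset.prod_range_succ']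
                  simp only [hz1, hz2]
                  ring
              _ = q 0 (x 0) * ∏ j ∈ range L, D (j+1) (x (j+1)) (x j) := by
                  rw [← Finset.sum_mul, hcol 0 (by omega)]
          exact mul_left_cancel₀ (ne_of_gt (hq 0 (by omega) (x 0))) key
        have h := IH (fun j => D (j+1)) (fun j => q (j+1))
          (fun j h => hq (j+1) (by omega)) (fun j h => hrow (j+1) (by omega))
          (fun j h => hcol (j+1) (by omega)) hid' (L-1) (by omega) u v
        simpa [Nat.sub_add_cancel hLpos] using h



/-- Detailed balance characterizes microscopic reversibility: each M_n
satisfies detailed balance with respect to its stationary distribution p_n if and only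
if the time reversal of X (initial distribution p_N, transition matrices in reversed
order) satisfies P(X_1=x_1,...,X_N=x_N|X_0=x_0)
= P(Y_1=x_{N-1},...,Y_N=x_0|Y_0=x_N) e^{-βQ(x)} for all realizations x. -/
theorem stmt_13 {S : Type*} [Fintype S] [DecidableEq S] [Nonempty S] (N : ℕ)
    (β : ℝ) (hβ : 0 < β)
    (M : ℕ → Matrix S S ℝ) (p : ℕ → S → ℝ) (E : ℕ → S → ℝ)
    (hp0 : ∀ x, 0 < p 0 x) (hp0sum : ∑ x, p 0 x = 1)
    (hstoch : ∀ n, 1 ≤ n → n ≤ N → (∀ a b, 0 ≤ M n a b) ∧ ∀ b, ∑ a, M n a b = 1)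
    (hirr : ∀ n, 1 ≤ n → n ≤ N → ∀ a b, ∃ m : ℕ, 1 ≤ m ∧ 0 < ((M n) ^ m) a b)
    (hstat : ∀ n, 1 ≤ n → n ≤ N → ∀ a, ∑ b, M n a b * p n b = p n a)
    (hpos : ∀ n, 1 ≤ n → n ≤ N → ∀ a, 0 < p n a)
    (hE : ∀ n ≤ N, ∀ a, p n a = Real.exp (-β * E n a) / ∑ b, Real.exp (-β * E n b)) :
    (∀ n, 1 ≤ n → n ≤ N → ∀ a b, M n b a * p n a = M n a b * p n b)
    ↔
    (∀ x : ℕ → S,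
      (∏ n ∈ Finset.range N, M (n + 1) (x (n + 1)) (x n))
        = (∏ n ∈ Finset.range N, M (N - n) (x (N - (n + 1))) (x (N - n)))
          * Real.exp (-β * ∑ n ∈ Finset.range N,
              (E (n + 1) (x (n + 1)) - E (n + 1) (x n)))) := by
  have hratio : ∀ n, n < N → ∀ a b : S,
      Real.exp (-β * (E (n+1) b - E (n+1) a)) * p (n+1) a = p (n+1) b := by
    intro n hn a b
    rw [hE (n+1) (by omega) a, hE (n+1) (by omega) b, ← mul_div_assoc]
    congr 1
    rw [← Real.exp_add]
    congr 1
    ring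
  have hreindex : ∀ x : ℕ → S,
      (∏ n ∈ Finset.range N, M (N - n) (x (N - (n + 1))) (x (N - n)))
        = ∏ n ∈ Finset.range N, M (n + 1) (x n) (x (n + 1)) := by
    intro x
    rw [← Finset.prod_range_reflect (fun k => M (k + 1) (x k) (x (k + 1))) N]
    refine Finset.prod_congr rfl fun j hj => ?_
    have hj' := Finset.mem_range.mp hj
    have h1 : N - (j + 1) = N - 1 - j := by omega
    have h2 : N - j = (N - 1 - j) + 1 := by omega
    rw [h1, h2]
  have hexp : ∀ x : ℕ → S,
      Real.exp (-β * ∑ n ∈ Finset.range N, (E (n + 1) (x (n + 1)) - E (n + 1) (x n)))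
        * ∏ n ∈ Finset.range N, p (n + 1) (x n)
      = ∏ n ∈ Finset.range N, p (n + 1) (x (n + 1)) := by
    intro x
    rw [Finset.mul_sum, Real.exp_sum, ← Finset.prod_mul_distrib]
    exact Finset.prod_congr rfl fun j hj =>
      hratio j (Finset.mem_range.mp hj) (x j) (x (j + 1))
  have hiff : ∀ x : ℕ → S,
      ((∏ n ∈ Finset.range N, M (n + 1) (x (n + 1)) (x n))
        = (∏ n ∈ Finset.range N, M (N - n) (x (N - (n + 1))) (x (N - n)))
          * Real.exp (-β * ∑ n ∈ Finset.range N,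
              (E (n + 1) (x (n + 1)) - E (n + 1) (x n))))
      ↔ ((∏ n ∈ Finset.range N, (M (n + 1) (x (n + 1)) (x n) * p (n + 1) (x n)))
        = ∏ n ∈ Finset.range N, (M (n + 1) (x n) (x (n + 1)) * p (n + 1) (x (n + 1)))) := by
    intro x
    have hP : (0:ℝ) < ∏ n ∈ Finset.range N, p (n + 1) (x n) :=
      Finset.prod_pos fun j hj => hpos (j + 1) (Nat.le_add_left 1 j)
        (by have := Finset.mem_range.mp hj; omega) (x j)
    have he := hexp x
    rw [hreindex x, Finset.prod_mul_distrib, Finset.prod_mul_distrib]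
    constructor
    · intro h
      rw [h, mul_assoc, he]
    · intro h
      apply mul_right_cancel₀ (ne_of_gt hP)
      rw [mul_assoc, he]
      exact h
  constructor
  · intro hDB x
    rw [hiff x]
    refine Finset.prod_congr rfl fun j hj => ?_
    have hj' := Finset.mem_range.mp hj
    exact hDB (j + 1) (Nat.le_add_left 1 j) (by omega) (x j) (x (j + 1))
  · intro hID n h1 hN a b
    have hrow' : ∀ j, j < N → ∀ w : S,
        ∑ u, M (j + 1) w u * p (j + 1) u = p (j + 1) w :=
      fun j hj w => hstat (j + 1) (by omega) (by omega) w
    have hcol' : ∀ j, j < N → ∀ w : S,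
        ∑ v, M (j + 1) v w * p (j + 1) w = p (j + 1) w := by
      intro j hj w
      rw [← Finset.sum_mul, (hstoch (j + 1) (by omega) (by omega)).2 w, one_mul]
    have key := strip_lemma N (fun j u v => M (j + 1) v u * p (j + 1) u)
      (fun j w => p (j + 1) w)
      (fun j hj w => hpos (j + 1) (by omega) (by omega) w)
      hrow' hcol'
      (fun x => (hiff x).mp (hID x)) (n - 1) (by omega) a b
    have hn1 : n - 1 + 1 = n := by omega
    rw [hn1] at key
    exact key
end

section
/- Oddness of work under equilibrium start: under the assumptions of the previous statement, if additionally the stationary distribution p_1 of M_1 equals the initial distribution p_0, then there exists a constant k ∈ ℝ such that W_{Y,Ê}(x^R) = -W_{X,E}(x) + k for all x ∈ S^{N+1}; moreover, if all transition matrices satisfy detailed balance and Y is the time reversal of X, the energies Ê can be chosen so that k = 0. -/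
open Finset

/-- Two energy functions with the same Boltzmann distribution have equal differences. -/
lemma stmt15_key {S : Type*} [Fintype S] [Nonempty S] {β : ℝ} (hβ : β ≠ 0) (f g : S → ℝ)
    (h : ∀ a, Real.exp (-β * f a) / ∑ b, Real.exp (-β * f b)
           = Real.exp (-β * g a) / ∑ b, Real.exp (-β * g b)) :
    ∀ a b : S, f a - f b = g a - g b := by
  have hF : (0:ℝ) < ∑ b, Real.exp (-β * f b) :=
    Finset.sum_pos (fun b _ => Real.exp_pos _) Finset.univ_nonempty
  have hG : (0:ℝ) < ∑ b, Real.exp (-β * g b) :=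
    Finset.sum_pos (fun b _ => Real.exp_pos _) Finset.univ_nonempty
  intro a b
  have ha := (div_eq_div_iff hF.ne' hG.ne').mp (h a)
  have hb := (div_eq_div_iff hF.ne' hG.ne').mp (h b)
  have h3 : Real.exp (-β * f a) * Real.exp (-β * g b)
      = Real.exp (-β * g a) * Real.exp (-β * f b) := by
    have hFG : (∑ c, Real.exp (-β * f c)) * (∑ c, Real.exp (-β * g c)) ≠ 0 := by positivity
    apply mul_right_cancel₀ hFG
    calc Real.exp (-β * f a) * Real.exp (-β * g b)
          * ((∑ c, Real.exp (-β * f c)) * (∑ c, Real.exp (-β * g c)))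
        = (Real.exp (-β * f a) * (∑ c, Real.exp (-β * g c)))
            * (Real.exp (-β * g b) * (∑ c, Real.exp (-β * f c))) := by ring
      _ = (Real.exp (-β * g a) * (∑ c, Real.exp (-β * f c)))
            * (Real.exp (-β * f b) * (∑ c, Real.exp (-β * g c))) := by rw [ha, ← hb]
      _ = Real.exp (-β * g a) * Real.exp (-β * f b)
            * ((∑ c, Real.exp (-β * f c)) * (∑ c, Real.exp (-β * g c))) := by ring
  rw [← Real.exp_add, ← Real.exp_add] at h3
  have h4 := Real.exp_injective h3
  have h5 : -β * (f a + g b) = -β * (g a + f b) := by linarith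
  have h6 := mul_left_cancel₀ (neg_ne_zero.mpr hβ) h5
  linarith

lemma stmt15_aux {S : Type*} [Fintype S] [Nonempty S] (K : ℕ) {β : ℝ} (hβ : β ≠ 0)
    (p : ℕ → S → ℝ) (E Ehat : ℕ → S → ℝ)
    (hE : ∀ n ≤ K + 1, ∀ a, p n a = Real.exp (-β * E n a) / ∑ b, Real.exp (-β * E n b))
    (hEhat0 : ∀ a, p (K + 1) a = Real.exp (-β * Ehat 0 a) / ∑ b, Real.exp (-β * Ehat 0 b))
    (hEhat : ∀ n < K + 1, ∀ a, p (K + 1 - n) a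
      = Real.exp (-β * Ehat (n + 1) a) / ∑ b, Real.exp (-β * Ehat (n + 1) b))
    (hp01 : ∀ a, p 1 a = p 0 a) (s₀ : S) :
    ∀ x : ℕ → S,
      (∑ n ∈ Finset.range (K + 1), (Ehat (n + 1) (x (K + 1 - n)) - Ehat n (x (K + 1 - n))))
        = -(∑ n ∈ Finset.range (K + 1), (E (n + 1) (x n) - E n (x n)))
          + ((E 1 s₀ - E 0 s₀) + ((Ehat (K + 1) s₀ - E 1 s₀) - (Ehat 0 s₀ - E (K + 1) s₀))) := by
  set e : ℕ → S → ℝ := fun m => if m = 0 then E (K + 1) else E (K + 2 - m) with he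
  have he0 : e 0 = E (K + 1) := by rw [he]; simp
  have heS : ∀ m, m ≠ 0 → e m = E (K + 2 - m) := by
    intro m hm
    rw [he]
    simp [hm]
  -- constancy of Ehat m - e m
  have hconst : ∀ m ≤ K + 1, ∀ y, Ehat m y - Ehat m s₀ = e m y - e m s₀ := by
    intro m hm y
    match m with
    | 0 =>
      have h := stmt15_key hβ (Ehat 0) (e 0) (fun a => by
        rw [he0, ← hEhat0 a, hE (K + 1) le_rfl a])
      exact h y s₀
    | j + 1 =>
      have hj : j < K + 1 := by omega
      have hKj : K + 2 - (j + 1) = K + 1 - j := by omega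
      have h := stmt15_key hβ (Ehat (j + 1)) (e (j + 1)) (fun a => by
        rw [heS (j + 1) (Nat.succ_ne_zero j), hKj, ← hEhat j hj a,
          hE (K + 1 - j) (by omega) a])
      exact h y s₀
  have hc : ∀ y, E 1 y - E 0 y = E 1 s₀ - E 0 s₀ := by
    intro y
    have h := stmt15_key hβ (E 1) (E 0) (fun a => by
      rw [← hE 1 (by omega) a, hp01 a, hE 0 (by omega) a]) y s₀
    linarith
  intro x
  have hterm : ∀ n ∈ Finset.range (K + 1),
      Ehat (n + 1) (x (K + 1 - n)) - Ehat n (x (K + 1 - n))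
        = (e (n + 1) (x (K + 1 - n)) - e n (x (K + 1 - n)))
          + ((Ehat (n + 1) s₀ - e (n + 1) s₀) - (Ehat n s₀ - e n s₀)) := by
    intro n hn
    simp only [Finset.mem_range] at hn
    have h1 := hconst (n + 1) (by omega) (x (K + 1 - n))
    have h2 := hconst n (by omega) (x (K + 1 - n))
    linarith
  rw [Finset.sum_congr rfl hterm, Finset.sum_add_distrib,
    Finset.sum_range_sub (fun m => Ehat m s₀ - e m s₀)]
  have heK : e (K + 1) = E 1 := by
    rw [heS (K + 1) (Nat.succ_ne_zero K), show K + 2 - (K + 1) = 1 by omega]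
  -- now handle the main sum
  have hreflect := Finset.sum_range_reflect
    (fun n => e (n + 1) (x (K + 1 - n)) - e n (x (K + 1 - n))) (K + 1)
  rw [← hreflect]
  have hterm2 : ∀ j ∈ Finset.range (K + 1),
      (fun n => e (n + 1) (x (K + 1 - n)) - e n (x (K + 1 - n))) (K + 1 - 1 - j)
        = e (K - j + 1) (x (j + 1)) - e (K - j) (x (j + 1)) := by
    intro j hj
    simp only [Finset.mem_range] at hj
    have h1 : K + 1 - 1 - j = K - j := by omega
    have h2 : K + 1 - (K - j) = j + 1 := by omega
    simp only [h1, h2]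
  rw [Finset.sum_congr rfl hterm2, Finset.sum_range_succ]
  have hlast : e (K - K + 1) (x (K + 1)) - e (K - K) (x (K + 1)) = 0 := by
    simp only [Nat.sub_self]
    have h1 : e 1 = E (K + 1) := by
      rw [heS 1 one_ne_zero, show K + 2 - 1 = K + 1 by omega]
    rw [h1, he0]
    ring
  rw [hlast, add_zero]
  have hterm3 : ∀ j ∈ Finset.range K,
      e (K - j + 1) (x (j + 1)) - e (K - j) (x (j + 1))
        = E (j + 1) (x (j + 1)) - E (j + 2) (x (j + 1)) := by
    intro j hj
    simp only [Finset.mem_range] at hj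
    have h1 : e (K - j + 1) = E (j + 1) := by
      have hi : K + 2 - (K - j + 1) = j + 1 := by omega
      rw [heS (K - j + 1) (Nat.succ_ne_zero _), hi]
    have h2 : e (K - j) = E (j + 2) := by
      have hi : K + 2 - (K - j) = j + 2 := by omega
      rw [heS (K - j) (by omega), hi]
    rw [h1, h2]
  rw [Finset.sum_congr rfl hterm3]
  rw [Finset.sum_range_succ' (fun n => E (n + 1) (x n) - E n (x n)) K]
  have hc0 := hc (x 0)
  have hsum : ∑ j ∈ Finset.range K, (E (j + 1) (x (j + 1)) - E (j + 2) (x (j + 1)))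
      = -∑ j ∈ Finset.range K, (E (j + 1 + 1) (x (j + 1)) - E (j + 1) (x (j + 1))) := by
    rw [← Finset.sum_neg_distrib]
    exact Finset.sum_congr rfl (fun j hj => by ring_nf)
  rw [hsum, he0, heK]
  ring_nf
  linarith [hc0]

/-- Oddness of work under equilibrium start: if additionally p_1 = p_0,
then there is a constant k with W_{Y,Ê}(x^R) = -W_{X,E}(x) + k for all realizations x;
moreover, under detailed balance (Y being the time reversal of X) the energies Ê can
be chosen so that k = 0. -/
theorem stmt_15 {S : Type*} [Fintype S] [DecidableEq S] [Nonempty S] (N : ℕ)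
    (β : ℝ) (hβ : 0 < β)
    (M : ℕ → Matrix S S ℝ) (p : ℕ → S → ℝ) (E Ehat : ℕ → S → ℝ)
    (hp0 : ∀ x, 0 < p 0 x) (hp0sum : ∑ x, p 0 x = 1)
    (hstoch : ∀ n, 1 ≤ n → n ≤ N → (∀ a b, 0 ≤ M n a b) ∧ ∀ b, ∑ a, M n a b = 1)
    (hirr : ∀ n, 1 ≤ n → n ≤ N → ∀ a b, ∃ m : ℕ, 1 ≤ m ∧ 0 < ((M n) ^ m) a b)
    (hstat : ∀ n, 1 ≤ n → n ≤ N → ∀ a, ∑ b, M n a b * p n b = p n a)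
    (hpos : ∀ n, 1 ≤ n → n ≤ N → ∀ a, 0 < p n a)
    (hE : ∀ n ≤ N, ∀ a, p n a = Real.exp (-β * E n a) / ∑ b, Real.exp (-β * E n b))
    (hEhat0 : ∀ a, p N a = Real.exp (-β * Ehat 0 a) / ∑ b, Real.exp (-β * Ehat 0 b))
    (hEhat : ∀ n < N, ∀ a,
      p (N - n) a = Real.exp (-β * Ehat (n + 1) a) / ∑ b, Real.exp (-β * Ehat (n + 1) b))
    -- the stationary distribution of M_1 equals the initial distribution
    (hp01 : ∀ a, p 1 a = p 0 a) :
    (∃ k : ℝ, ∀ x : ℕ → S,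
      (∑ n ∈ Finset.range N, (Ehat (n + 1) (x (N - n)) - Ehat n (x (N - n))))
        = -(∑ n ∈ Finset.range N, (E (n + 1) (x n) - E n (x n))) + k)
    ∧
    ((∀ n, 1 ≤ n → n ≤ N → ∀ a b, M n b a * p n a = M n a b * p n b) →
      ∃ Ehat' : ℕ → S → ℝ,
        (∀ a, p N a = Real.exp (-β * Ehat' 0 a) / ∑ b, Real.exp (-β * Ehat' 0 b)) ∧
        (∀ n < N, ∀ a, p (N - n) a
          = Real.exp (-β * Ehat' (n + 1) a) / ∑ b, Real.exp (-β * Ehat' (n + 1) b)) ∧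
        ∀ x : ℕ → S,
          (∑ n ∈ Finset.range N, (Ehat' (n + 1) (x (N - n)) - Ehat' n (x (N - n))))
            = -(∑ n ∈ Finset.range N, (E (n + 1) (x n) - E n (x n)))) := by
  have hβ' : β ≠ 0 := ne_of_gt hβ
  obtain ⟨s₀⟩ := (inferInstance : Nonempty S)
  match N with
  | 0 =>
    constructor
    · exact ⟨0, fun x => by simp⟩
    · intro _
      refine ⟨E, hE 0 le_rfl, fun n hn => absurd hn (by omega), fun x => by simp⟩
  | K + 1 =>
    constructor
    · exact ⟨(E 1 s₀ - E 0 s₀) + ((Ehat (K + 1) s₀ - E 1 s₀) - (Ehat 0 s₀ - E (K + 1) s₀)),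
        stmt15_aux K hβ' p E Ehat hE hEhat0 hEhat hp01 s₀⟩
    · intro _
      set Ehat' : ℕ → S → ℝ :=
        fun m => if m = 0 then E (K + 1) else if m = K + 1 then E 0 else E (K + 2 - m)
        with hE'
      have hE'0 : Ehat' 0 = E (K + 1) := by rw [hE']; simp
      have hE'K : Ehat' (K + 1) = E 0 := by rw [hE']; simp
      have h0' : ∀ a, p (K + 1) a
          = Real.exp (-β * Ehat' 0 a) / ∑ b, Real.exp (-β * Ehat' 0 b) := by
        intro a
        rw [hE'0]
        exact hE (K + 1) le_rfl a
      have h' : ∀ n < K + 1, ∀ a, p (K + 1 - n) a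
          = Real.exp (-β * Ehat' (n + 1) a) / ∑ b, Real.exp (-β * Ehat' (n + 1) b) := by
        intro n hn a
        by_cases hnK : n = K
        · rw [show n + 1 = K + 1 by omega, hE'K, show K + 1 - n = 1 by omega, hp01 a]
          exact hE 0 (by omega) a
        · have h1 : Ehat' (n + 1) = E (K + 1 - n) := by
            rw [hE']
            simp only [Nat.succ_ne_zero, if_false]
            rw [if_neg (by omega), show K + 2 - (n + 1) = K + 1 - n by omega]
          rw [h1]
          exact hE (K + 1 - n) (by omega) a
      refine ⟨Ehat', h0', h', fun x => ?_⟩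
      have hmain := stmt15_aux K hβ' p E Ehat' hE h0' h' hp01 s₀ x
      rw [hmain, hE'0, hE'K]
      ring
end

section
/- Generalized Crooks fluctuation theorem: if X = (X_n)_{n=0}^N is a Markov chain on finite S with positive initial distribution p_0, irreducible transition matrices (M_n), and p_0 equal to the stationary distribution p_1 of M_1, then there exist a Markov chain Y and a constant k ∈ ℝ such that for every w in the support of the distribution of W_{X,E}, P(W_{X,E} = w) / P(W_{Y,Ê} = -w + k) = e^{β(w - ΔF)}, where ΔF is the free energy difference; in particular the denominator is non-zero for all such w. -/
open Finset
open scoped Classical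

section CrooksAux

variable {S : Type*}

/-- the `i`-th state of a path, as a function of a natural number index. -/
def nthPath (N : ℕ) (x : Fin (N + 1) → S) (i : ℕ) : S :=
  x ⟨min i N, Nat.lt_succ_of_le (min_le_right i N)⟩

lemma nthPath_castSucc (N : ℕ) (x : Fin (N + 1) → S) (n : Fin N) :
    x n.castSucc = nthPath N x n := by
  have := n.isLt
  unfold nthPath
  congr 1
  apply Fin.ext
  simp <;> omega

lemma nthPath_succ (N : ℕ) (x : Fin (N + 1) → S) (n : Fin N) :
    x n.succ = nthPath N x ((n : ℕ) + 1) := by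
  have := n.isLt
  unfold nthPath
  congr 1
  apply Fin.ext
  simp <;> omega

lemma nthPath_zero (N : ℕ) (x : Fin (N + 1) → S) : x 0 = nthPath N x 0 := by
  unfold nthPath
  congr 1

lemma rev_castSucc_eq (N : ℕ) (x : Fin (N + 1) → S) (n : Fin N) :
    x (Fin.rev n.castSucc) = nthPath N x (N - (n : ℕ)) := by
  have := n.isLt
  unfold nthPath
  congr 1
  apply Fin.ext
  simp [Fin.val_rev] <;> omega

lemma rev_succ_eq (N : ℕ) (x : Fin (N + 1) → S) (n : Fin N) :
    x (Fin.rev n.succ) = nthPath N x (N - ((n : ℕ) + 1)) := by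
  have := n.isLt
  unfold nthPath
  congr 1
  apply Fin.ext
  simp [Fin.val_rev] <;> omega

lemma rev_zero_eq (N : ℕ) (x : Fin (N + 1) → S) :
    x (Fin.rev 0) = nthPath N x N := by
  unfold nthPath
  congr 1
  apply Fin.ext
  simp [Fin.val_rev]

/-- reversal of paths, as an equivalence. -/
def revEquiv (N : ℕ) (S : Type*) : (Fin (N + 1) → S) ≃ (Fin (N + 1) → S) where
  toFun x := fun j => x (Fin.rev j)
  invFun x := fun j => x (Fin.rev j)
  left_inv x := by funext i; simp [Fin.rev_rev]
  right_inv x := by funext i; simp [Fin.rev_rev]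

/-- the reversed transition matrices. -/
noncomputable def MhatD (N : ℕ) (M : ℕ → Matrix S S ℝ) (p : ℕ → S → ℝ) (n : ℕ) : Matrix S S ℝ :=
  Matrix.of fun a b => p (N + 1 - n) a / p (N + 1 - n) b * M (N + 1 - n) b a

/-- the distributions of the reversed chain. -/
def qD (N : ℕ) (p : ℕ → S → ℝ) (n : ℕ) : S → ℝ := p (N - (n - 1))

/-- the energies of the reversed chain. -/
noncomputable def EhatD (N : ℕ) (E : ℕ → S → ℝ) (c : ℝ) (n : ℕ) (a : S) : ℝ :=
  E (N - (n - 1)) a - (if n = 0 then 0 else c)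

end CrooksAux

/-- Generalized Crooks fluctuation theorem: if moreover p_0 equals the
stationary distribution p_1 of M_1, then there exist a Markov chain Y (with a family
of energies Ê) and a constant k such that for every w in the support of the work
distribution of X, P(W_{X,E} = w) / P(W_{Y,Ê} = -w + k) = e^{β(w - ΔF)}, the
denominator being non-zero for all such w. -/
theorem stmt_16 {S : Type*} [Fintype S] [DecidableEq S] [Nonempty S] (N : ℕ)
    (β : ℝ) (hβ : 0 < β)
    (M : ℕ → Matrix S S ℝ) (p : ℕ → S → ℝ) (E : ℕ → S → ℝ)
    (hp0 : ∀ x, 0 < p 0 x) (hp0sum : ∑ x, p 0 x = 1)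
    (hstoch : ∀ n, 1 ≤ n → n ≤ N → (∀ a b, 0 ≤ M n a b) ∧ ∀ b, ∑ a, M n a b = 1)
    (hirr : ∀ n, 1 ≤ n → n ≤ N → ∀ a b, ∃ m : ℕ, 1 ≤ m ∧ 0 < ((M n) ^ m) a b)
    (hstat : ∀ n, 1 ≤ n → n ≤ N → ∀ a, ∑ b, M n a b * p n b = p n a)
    (hpos : ∀ n, 1 ≤ n → n ≤ N → ∀ a, 0 < p n a)
    (hE : ∀ n ≤ N, ∀ a, p n a = Real.exp (-β * E n a) / ∑ b, Real.exp (-β * E n b))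
    -- p_0 is the stationary distribution of M_1
    (hp01 : ∀ a, p 1 a = p 0 a) :
    ∃ (Mhat : ℕ → Matrix S S ℝ) (q : ℕ → S → ℝ) (Ehat : ℕ → S → ℝ) (k : ℝ),
      -- Y is a Markov chain: initial distribution q 0 and stochastic matrices Mhat
      (∀ a, 0 < q 0 a) ∧ (∑ a, q 0 a = 1) ∧
      (∀ n, 1 ≤ n → n ≤ N →
        (∀ a b, 0 ≤ Mhat n a b) ∧ (∀ b, ∑ a, Mhat n a b = 1) ∧
        (∀ a, ∑ b, Mhat n a b * q n b = q n a) ∧ (∀ a, 0 < q n a)) ∧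
      -- Ê is a family of energies of Y
      (∀ n ≤ N, ∀ a, q n a = Real.exp (-β * Ehat n a) / ∑ b, Real.exp (-β * Ehat n b)) ∧
      -- the fluctuation relation on the support of the work distribution of X
      (∀ w : ℝ,
        (∑ x : Fin (N + 1) → S,
          if (∑ n : Fin N, (E ((n : ℕ) + 1) (x n.castSucc) - E (n : ℕ) (x n.castSucc))) = w
          then p 0 (x 0) * ∏ n : Fin N, M ((n : ℕ) + 1) (x n.succ) (x n.castSucc)
          else 0) ≠ 0 →
        (∑ y : Fin (N + 1) → S,
          if (∑ n : Fin N, (Ehat ((n : ℕ) + 1) (y n.castSucc) - Ehat (n : ℕ) (y n.castSucc)))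
              = -w + k
          then q 0 (y 0) * ∏ n : Fin N, Mhat ((n : ℕ) + 1) (y n.succ) (y n.castSucc)
          else 0) ≠ 0 ∧
        (∑ x : Fin (N + 1) → S,
          if (∑ n : Fin N, (E ((n : ℕ) + 1) (x n.castSucc) - E (n : ℕ) (x n.castSucc))) = w
          then p 0 (x 0) * ∏ n : Fin N, M ((n : ℕ) + 1) (x n.succ) (x n.castSucc)
          else 0)
        / (∑ y : Fin (N + 1) → S,
          if (∑ n : Fin N, (Ehat ((n : ℕ) + 1) (y n.castSucc) - Ehat (n : ℕ) (y n.castSucc)))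
              = -w + k
          then q 0 (y 0) * ∏ n : Fin N, Mhat ((n : ℕ) + 1) (y n.succ) (y n.castSucc)
          else 0)
        = Real.exp (β * (w - ((-(1 / β) * Real.log (∑ b, Real.exp (-β * E N b)))
            - (-(1 / β) * Real.log (∑ b, Real.exp (-β * E 0 b))))))) := by
  classical
  have hb : β ≠ 0 := ne_of_gt hβ
  have hZpos : ∀ m : ℕ, (0:ℝ) < ∑ b, Real.exp (-β * E m b) :=
    fun m => Finset.sum_pos (fun b _ => Real.exp_pos _) Finset.univ_nonempty
  have hppos : ∀ m, m ≤ N → ∀ a, 0 < p m a := by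
    intro m hm a
    rw [hE m hm a]
    exact div_pos (Real.exp_pos _) (hZpos m)
  have hpsum : ∀ m, m ≤ N → ∑ a, p m a = 1 := by
    intro m hm
    rw [Finset.sum_congr rfl fun a _ => hE m hm a, ← Finset.sum_div,
      div_self (hZpos m).ne']
  set c : ℝ := (Real.log (∑ b, Real.exp (-β * E 0 b))
      - Real.log (∑ b, Real.exp (-β * E 1 b))) / β with hcdef
  have hc : 1 ≤ N → ∀ a, E 1 a - E 0 a = c := by
    intro hN a
    have h := hp01 a
    rw [hE 1 hN a, hE 0 (Nat.zero_le N) a,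
      div_eq_div_iff (hZpos 1).ne' (hZpos 0).ne'] at h
    have h3 := congrArg Real.log h
    rw [Real.log_mul (Real.exp_ne_zero _) (hZpos 0).ne',
        Real.log_mul (Real.exp_ne_zero _) (hZpos 1).ne',
        Real.log_exp, Real.log_exp] at h3
    rw [hcdef, eq_div_iff hb]
    linarith
  refine ⟨MhatD N M p, qD N p, EhatD N E c, 0, ?_, ?_, ?_, ?_, ?_⟩
  · intro a
    simpa [qD] using hppos N le_rfl a
  · simpa [qD] using hpsum N le_rfl
  · intro n hn1 hnN
    have hq : N - (n - 1) = N + 1 - n := by omega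
    have hm1 : 1 ≤ N + 1 - n := by omega
    have hmN : N + 1 - n ≤ N := by omega
    refine ⟨fun a b => ?_, fun b => ?_, fun a => ?_, fun a => ?_⟩
    · simp only [MhatD, Matrix.of_apply]
      exact mul_nonneg (le_of_lt (div_pos (hppos _ hmN a) (hppos _ hmN b)))
        ((hstoch _ hm1 hmN).1 b a)
    · simp only [MhatD, Matrix.of_apply]
      have h1 : ∀ a : S, p (N + 1 - n) a / p (N + 1 - n) b * M (N + 1 - n) b a
          = M (N + 1 - n) b a * p (N + 1 - n) a / p (N + 1 - n) b := by
        intro a; ring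
      rw [Finset.sum_congr rfl fun a _ => h1 a, ← Finset.sum_div,
        hstat _ hm1 hmN b, div_self (hppos _ hmN b).ne']
    · simp only [MhatD, Matrix.of_apply, qD, hq]
      have h1 : ∀ b : S, p (N + 1 - n) a / p (N + 1 - n) b * M (N + 1 - n) b a * p (N + 1 - n) b
          = p (N + 1 - n) a * M (N + 1 - n) b a := by
        intro b
        rw [div_mul_eq_mul_div, div_mul_cancel₀ _ (hppos _ hmN b).ne']
      rw [Finset.sum_congr rfl fun b _ => h1 b, ← Finset.mul_sum,
        (hstoch _ hm1 hmN).2 a, mul_one]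
    · simp only [qD, hq]
      exact hppos _ hmN a
  · intro n hn a
    have hmN : N - (n - 1) ≤ N := by omega
    simp only [EhatD, qD]
    rw [hE (N - (n - 1)) hmN a]
    have h1 : ∀ bb : S, Real.exp (-β * (E (N - (n - 1)) bb - (if n = 0 then (0:ℝ) else c)))
        = Real.exp (β * (if n = 0 then (0:ℝ) else c)) * Real.exp (-β * E (N - (n - 1)) bb) := by
      intro bb
      rw [← Real.exp_add]
      congr 1
      ring
    rw [Finset.sum_congr rfl fun b _ => h1 b, ← Finset.mul_sum, h1 a,
      mul_div_mul_left _ _ (Real.exp_ne_zero _)]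
  · set DF : ℝ := (-(1 / β) * Real.log (∑ b, Real.exp (-β * E N b)))
      - (-(1 / β) * Real.log (∑ b, Real.exp (-β * E 0 b))) with hDFdef
    have hWrev : ∀ X : ℕ → S,
        ∑ i ∈ range N, (EhatD N E c (i + 1) (X (N - i)) - EhatD N E c i (X (N - i)))
          = -∑ i ∈ range N, (E (i + 1) (X i) - E i (X i)) := by
      intro X
      rcases Nat.eq_zero_or_pos N with hN0 | hN0
      · subst hN0; simp
      obtain ⟨K, rfl⟩ : ∃ K, N = K + 1 := ⟨N - 1, by omega⟩
      simp only [Finset.sum_range_succ']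
      have h1 : ∀ i ∈ range K,
          EhatD (K + 1) E c (i + 1 + 1) (X (K + 1 - (i + 1))) - EhatD (K + 1) E c (i + 1) (X (K + 1 - (i + 1)))
            = -(E (K - i + 1) (X (K - i)) - E (K - i) (X (K - i))) := by
        intro i hi
        have hiK : i < K := Finset.mem_range.mp hi
        simp only [EhatD, if_neg (by omega : ¬(i + 1 + 1 = 0)), if_neg (by omega : ¬(i + 1 = 0))]
        have e2 : K + 1 - (i + 1 + 1 - 1) = K - i := by omega
        have e3 : K + 1 - (i + 1 - 1) = K - i + 1 := by omega
        have e4 : K + 1 - (i + 1) = K - i := by omega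
        rw [e2, e3, e4]
        ring
      rw [Finset.sum_congr rfl h1]
      have h0 : EhatD (K + 1) E c (0 + 1) (X (K + 1 - 0)) - EhatD (K + 1) E c 0 (X (K + 1 - 0)) = -c := by
        simp [EhatD]
      rw [h0]
      have h2 : ∑ i ∈ range K, -(E (K - i + 1) (X (K - i)) - E (K - i) (X (K - i)))
          = ∑ i ∈ range K, -(E (i + 1 + 1) (X (i + 1)) - E (i + 1) (X (i + 1))) := by
        rw [← Finset.sum_range_reflect (fun j => -(E (j + 1 + 1) (X (j + 1)) - E (j + 1) (X (j + 1)))) K]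
        refine Finset.sum_congr rfl fun i hi => ?_
        have hiK : i < K := Finset.mem_range.mp hi
        have e5 : K - 1 - i + 1 = K - i := by omega
        rw [e5]
      rw [h2, Finset.sum_neg_distrib]
      have ha0 : E (0 + 1) (X 0) - E 0 (X 0) = c := hc hN0 (X 0)
      rw [ha0]
      ring
    have hTF : ∀ v : ℝ, Real.exp (-(β * (v - DF)))
        = Real.exp (-(β * v)) * ((∑ b, Real.exp (-β * E 0 b)) / (∑ b, Real.exp (-β * E N b))) := by
      intro v
      have harg : -(β * (v - DF)) = -(β * v)
          + (Real.log (∑ b, Real.exp (-β * E 0 b)) - Real.log (∑ b, Real.exp (-β * E N b))) := by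
        rw [hDFdef]
        field_simp
        ring
      rw [harg, Real.exp_add, Real.exp_sub, Real.exp_log (hZpos 0), Real.exp_log (hZpos N)]
    have hgrev : ∀ X : ℕ → S,
        p N (X N) * ∏ i ∈ range N, MhatD N M p (i + 1) (X (N - (i + 1))) (X (N - i))
          = Real.exp (-(β * ((∑ i ∈ range N, (E (i + 1) (X i) - E i (X i))) - DF)))
            * (p 0 (X 0) * ∏ i ∈ range N, M (i + 1) (X (i + 1)) (X i)) := by
      intro X
      have hprod : ∏ i ∈ range N, MhatD N M p (i + 1) (X (N - (i + 1))) (X (N - i))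
          = (∏ i ∈ range N, p (i + 1) (X i) / p (i + 1) (X (i + 1)))
            * ∏ i ∈ range N, M (i + 1) (X (i + 1)) (X i) := by
        rw [← Finset.prod_mul_distrib]
        calc ∏ i ∈ range N, MhatD N M p (i + 1) (X (N - (i + 1))) (X (N - i))
            = ∏ i ∈ range N, (p (N - 1 - i + 1) (X (N - 1 - i)) / p (N - 1 - i + 1) (X (N - 1 - i + 1))
                * M (N - 1 - i + 1) (X (N - 1 - i + 1)) (X (N - 1 - i))) := by
              refine Finset.prod_congr rfl fun i hi => ?_
              have hiN : i < N := Finset.mem_range.mp hi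
              simp only [MhatD, Matrix.of_apply]
              have e1 : N + 1 - (i + 1) = N - 1 - i + 1 := by omega
              have e2 : N - (i + 1) = N - 1 - i := by omega
              have e3 : N - i = N - 1 - i + 1 := by omega
              rw [e1, e2, e3]
          _ = ∏ i ∈ range N, (p (i + 1) (X i) / p (i + 1) (X (i + 1)) * M (i + 1) (X (i + 1)) (X i)) :=
              Finset.prod_range_reflect (fun j => p (j + 1) (X j) / p (j + 1) (X (j + 1))
                * M (j + 1) (X (j + 1)) (X j)) N
      have hratio : ∏ i ∈ range N, p (i + 1) (X i) / p (i + 1) (X (i + 1))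
          = Real.exp (∑ i ∈ range N, (-β * E (i + 1) (X i) - -β * E (i + 1) (X (i + 1)))) := by
        rw [Real.exp_sum]
        refine Finset.prod_congr rfl fun i hi => ?_
        have hiN : i + 1 ≤ N := by have := Finset.mem_range.mp hi; omega
        rw [hE (i + 1) hiN (X i), hE (i + 1) hiN (X (i + 1)), div_div_div_comm,
          div_self (hZpos (i + 1)).ne', div_one, Real.exp_sub]
      have hexp : (-β * E N (X N)) + (∑ i ∈ range N, (-β * E (i + 1) (X i) - -β * E (i + 1) (X (i + 1))))
          = (-(β * (∑ i ∈ range N, (E (i + 1) (X i) - E i (X i))))) + (-β * E 0 (X 0)) := by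
        have htel : ∑ i ∈ range N, (β * E (i + 1) (X (i + 1)) - β * E i (X i))
            = β * E N (X N) - β * E 0 (X 0) := Finset.sum_range_sub (fun i => β * E i (X i)) N
        have hsplit : ∑ i ∈ range N, (-β * E (i + 1) (X i) - -β * E (i + 1) (X (i + 1)))
            = (∑ i ∈ range N, (β * E (i + 1) (X (i + 1)) - β * E i (X i)))
              + ∑ i ∈ range N, (-β * (E (i + 1) (X i) - E i (X i))) := by
          rw [← Finset.sum_add_distrib]
          exact Finset.sum_congr rfl fun i _ => by ring
        have hW2 : ∑ i ∈ range N, (-β * (E (i + 1) (X i) - E i (X i)))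
            = -(β * ∑ i ∈ range N, (E (i + 1) (X i) - E i (X i))) := by
          rw [Finset.mul_sum, ← Finset.sum_neg_distrib]
          exact Finset.sum_congr rfl fun i _ => by ring
        rw [hsplit, htel, hW2]
        ring
      have hkey : Real.exp (-β * E N (X N))
            * Real.exp (∑ i ∈ range N, (-β * E (i + 1) (X i) - -β * E (i + 1) (X (i + 1))))
          = Real.exp (-(β * (∑ i ∈ range N, (E (i + 1) (X i) - E i (X i)))))
            * Real.exp (-β * E 0 (X 0)) := by
        rw [← Real.exp_add, ← Real.exp_add, hexp]
      rw [hprod, hratio, hE N le_rfl (X N), hE 0 (Nat.zero_le N) (X 0), hTF]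
      have hZN := (hZpos N).ne'
      have hZ0 := (hZpos 0).ne'
      calc Real.exp (-β * E N (X N)) / (∑ b, Real.exp (-β * E N b))
            * (Real.exp (∑ i ∈ range N, (-β * E (i + 1) (X i) - -β * E (i + 1) (X (i + 1))))
              * ∏ i ∈ range N, M (i + 1) (X (i + 1)) (X i))
          = (Real.exp (-β * E N (X N))
              * Real.exp (∑ i ∈ range N, (-β * E (i + 1) (X i) - -β * E (i + 1) (X (i + 1)))))
            * (∏ i ∈ range N, M (i + 1) (X (i + 1)) (X i)) / (∑ b, Real.exp (-β * E N b)) := by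
            ring
        _ = (Real.exp (-(β * (∑ i ∈ range N, (E (i + 1) (X i) - E i (X i)))))
              * Real.exp (-β * E 0 (X 0)))
            * (∏ i ∈ range N, M (i + 1) (X (i + 1)) (X i)) / (∑ b, Real.exp (-β * E N b)) := by
            rw [hkey]
        _ = Real.exp (-(β * (∑ i ∈ range N, (E (i + 1) (X i) - E i (X i)))))
            * ((∑ b, Real.exp (-β * E 0 b)) / (∑ b, Real.exp (-β * E N b)))
            * (Real.exp (-β * E 0 (X 0)) / (∑ b, Real.exp (-β * E 0 b))
              * ∏ i ∈ range N, M (i + 1) (X (i + 1)) (X i)) := by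
            field_simp
    intro w hnum
    rw [show (-w + (0:ℝ)) = -w from add_zero _]
    have hcore : (∑ y : Fin (N + 1) → S,
          if (∑ n : Fin N, (EhatD N E c ((n : ℕ) + 1) (y n.castSucc) - EhatD N E c (n : ℕ) (y n.castSucc))) = -w
          then qD N p 0 (y 0) * ∏ n : Fin N, MhatD N M p ((n : ℕ) + 1) (y n.succ) (y n.castSucc)
          else 0)
        = Real.exp (-(β * (w - DF))) * (∑ x : Fin (N + 1) → S,
          if (∑ n : Fin N, (E ((n : ℕ) + 1) (x n.castSucc) - E (n : ℕ) (x n.castSucc))) = w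
          then p 0 (x 0) * ∏ n : Fin N, M ((n : ℕ) + 1) (x n.succ) (x n.castSucc)
          else 0) := by
      calc (∑ y : Fin (N + 1) → S,
          if (∑ n : Fin N, (EhatD N E c ((n : ℕ) + 1) (y n.castSucc) - EhatD N E c (n : ℕ) (y n.castSucc))) = -w
          then qD N p 0 (y 0) * ∏ n : Fin N, MhatD N M p ((n : ℕ) + 1) (y n.succ) (y n.castSucc)
          else 0)
          = ∑ x : Fin (N + 1) → S,
          (if (∑ n : Fin N, (EhatD N E c ((n : ℕ) + 1) (x (Fin.rev n.castSucc)) - EhatD N E c (n : ℕ) (x (Fin.rev n.castSucc)))) = -w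
          then qD N p 0 (x (Fin.rev 0)) * ∏ n : Fin N, MhatD N M p ((n : ℕ) + 1) (x (Fin.rev n.succ)) (x (Fin.rev n.castSucc))
          else 0) :=
            (Fintype.sum_bijective _ (revEquiv N S).bijective _ _ (fun x => rfl)).symm
        _ = ∑ x : Fin (N + 1) → S, Real.exp (-(β * (w - DF))) *
          (if (∑ n : Fin N, (E ((n : ℕ) + 1) (x n.castSucc) - E (n : ℕ) (x n.castSucc))) = w
          then p 0 (x 0) * ∏ n : Fin N, M ((n : ℕ) + 1) (x n.succ) (x n.castSucc)
          else 0) := by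
            refine Finset.sum_congr rfl fun x _ => ?_
            have hA : (∑ n : Fin N, (EhatD N E c ((n : ℕ) + 1) (x (Fin.rev n.castSucc)) - EhatD N E c (n : ℕ) (x (Fin.rev n.castSucc))))
                = -(∑ n : Fin N, (E ((n : ℕ) + 1) (x n.castSucc) - E (n : ℕ) (x n.castSucc))) := by
              calc (∑ n : Fin N, (EhatD N E c ((n : ℕ) + 1) (x (Fin.rev n.castSucc)) - EhatD N E c (n : ℕ) (x (Fin.rev n.castSucc))))
                  = ∑ n : Fin N, (EhatD N E c ((n : ℕ) + 1) (nthPath N x (N - (n : ℕ))) - EhatD N E c (n : ℕ) (nthPath N x (N - (n : ℕ)))) :=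
                    Finset.sum_congr rfl fun n _ => by rw [rev_castSucc_eq N x n]
                _ = ∑ i ∈ range N, (EhatD N E c (i + 1) (nthPath N x (N - i)) - EhatD N E c i (nthPath N x (N - i))) :=
                    Fin.sum_univ_eq_sum_range (fun i => EhatD N E c (i + 1) (nthPath N x (N - i)) - EhatD N E c i (nthPath N x (N - i))) N
                _ = -∑ i ∈ range N, (E (i + 1) (nthPath N x i) - E i (nthPath N x i)) := hWrev (nthPath N x)
                _ = -(∑ n : Fin N, (E ((n : ℕ) + 1) (x n.castSucc) - E (n : ℕ) (x n.castSucc))) := by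
                    congr 1
                    refine ((Fin.sum_univ_eq_sum_range (fun i => E (i + 1) (nthPath N x i) - E i (nthPath N x i)) N).symm).trans ?_
                    exact Finset.sum_congr rfl fun n _ => by rw [nthPath_castSucc N x n]
            have hB : qD N p 0 (x (Fin.rev 0)) * ∏ n : Fin N, MhatD N M p ((n : ℕ) + 1) (x (Fin.rev n.succ)) (x (Fin.rev n.castSucc))
                = Real.exp (-(β * ((∑ n : Fin N, (E ((n : ℕ) + 1) (x n.castSucc) - E (n : ℕ) (x n.castSucc))) - DF)))
                  * (p 0 (x 0) * ∏ n : Fin N, M ((n : ℕ) + 1) (x n.succ) (x n.castSucc)) := by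
              have e0 : qD N p 0 (x (Fin.rev 0)) = p N (nthPath N x N) := by
                rw [rev_zero_eq N x]
                simp [qD]
              have eP : ∏ n : Fin N, MhatD N M p ((n : ℕ) + 1) (x (Fin.rev n.succ)) (x (Fin.rev n.castSucc))
                  = ∏ i ∈ range N, MhatD N M p (i + 1) (nthPath N x (N - (i + 1))) (nthPath N x (N - i)) := by
                refine Eq.trans ?_ (Fin.prod_univ_eq_prod_range (fun i => MhatD N M p (i + 1) (nthPath N x (N - (i + 1))) (nthPath N x (N - i))) N)
                exact Finset.prod_congr rfl fun n _ => by rw [rev_succ_eq N x n, rev_castSucc_eq N x n]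
              have eW : (∑ i ∈ range N, (E (i + 1) (nthPath N x i) - E i (nthPath N x i)))
                  = ∑ n : Fin N, (E ((n : ℕ) + 1) (x n.castSucc) - E (n : ℕ) (x n.castSucc)) := by
                refine ((Fin.sum_univ_eq_sum_range (fun i => E (i + 1) (nthPath N x i) - E i (nthPath N x i)) N).symm).trans ?_
                exact Finset.sum_congr rfl fun n _ => by rw [nthPath_castSucc N x n]
              have eM : (∏ i ∈ range N, M (i + 1) (nthPath N x (i + 1)) (nthPath N x i))
                  = ∏ n : Fin N, M ((n : ℕ) + 1) (x n.succ) (x n.castSucc) := by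
                refine ((Fin.prod_univ_eq_prod_range (fun i => M (i + 1) (nthPath N x (i + 1)) (nthPath N x i)) N).symm).trans ?_
                exact Finset.prod_congr rfl fun n _ => by rw [nthPath_succ N x n, nthPath_castSucc N x n]
              rw [e0, eP, hgrev (nthPath N x), eW, eM, ← nthPath_zero N x]
            by_cases hcond : (∑ n : Fin N, (E ((n : ℕ) + 1) (x n.castSucc) - E (n : ℕ) (x n.castSucc))) = w
            · rw [if_pos (by rw [hA, hcond]), if_pos hcond, hB, hcond]
            · rw [if_neg (fun hcontra => hcond (by rw [hA] at hcontra; exact neg_injective hcontra)),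
                if_neg hcond, mul_zero]
        _ = Real.exp (-(β * (w - DF))) * (∑ x : Fin (N + 1) → S,
          if (∑ n : Fin N, (E ((n : ℕ) + 1) (x n.castSucc) - E (n : ℕ) (x n.castSucc))) = w
          then p 0 (x 0) * ∏ n : Fin N, M ((n : ℕ) + 1) (x n.succ) (x n.castSucc)
          else 0) := by rw [← Finset.mul_sum]
    constructor
    · rw [hcore]
      exact mul_ne_zero (Real.exp_ne_zero _) hnum
    · rw [hcore, mul_comm, div_mul_eq_div_div, div_self hnum, one_div, ← Real.exp_neg]
      congr 1
      ring
end

section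
/- Counterexample when p_0 ≠ p_1: there exists a two-step Markov chain X = (X_0, X_1) on the three-element state space S = {A,B,C}, with positive initial distribution, irreducible transition matrix satisfying detailed balance, β = 1, for which Crooks' fluctuation relation P(W_X = w)/P(W_Y = -w) = e^{β(w - ΔF)} fails or is undefined at every work value w: specifically, take p_0 = (a,b,c) with a,b,c > 0, b < c, a+b+c = 1, energies E_0 = (log(1/a), log(1/b), log(1/c)) and E_1 = (log(1/a), log(1/c), log(1/b)); then for the two nonzero work values the ratio is undefined (denominator zero with positive numerator), and at w = 0 the ratio equals a < 1 = e^{βw}. -/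
open Finset
open scoped Classical

/-- Counterexample when p_0 ≠ p_1: for the two-step Markov chain
X = (X_0, X_1) on S = {A,B,C} with p_0 = (a,b,c) (a,b,c > 0, b < c, a+b+c = 1),
β = 1, energies E_0 = (log(1/a), log(1/b), log(1/c)),
E_1 = (log(1/a), log(1/c), log(1/b)), transition matrix M_1 with all columns equal to
(a,c,b)ᵀ, and Y its time reversal (starting in p_1 = (a,c,b), using M_1, so W_Y ≡ 0),
Crooks' relation P(W_X = w)/P(W_Y = -w) = e^{β(w - ΔF)} fails or is undefined at every
work value w in the support of W_X. -/
theorem stmt_18 (a b c : ℝ) (ha : 0 < a) (hb : 0 < b) (hc : 0 < c)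
    (hbc : b < c) (habc : a + b + c = 1) :
    ∀ w : ℝ,
      -- P(W_X = w): paths (x_0, x_1), work E_1(x_0) - E_0(x_0), measure p_0(x_0) M(x_1,x_0)
      (∑ x : Fin 3 × Fin 3,
        if (![Real.log (1/a), Real.log (1/c), Real.log (1/b)] x.1
            - ![Real.log (1/a), Real.log (1/b), Real.log (1/c)] x.1) = w
        then ![a, b, c] x.1 * ![a, c, b] x.2
        else 0) ≠ 0 →
      -- P(W_Y = -w): Y starts in p_1 = (a,c,b), its work is Ê_1 - Ê_0 = E_1 - E_1 = 0
      ((∑ y : Fin 3 × Fin 3,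
        if (![Real.log (1/a), Real.log (1/c), Real.log (1/b)] y.1
            - ![Real.log (1/a), Real.log (1/c), Real.log (1/b)] y.1) = -w
        then ![a, c, b] y.1 * ![a, c, b] y.2
        else 0) = 0
      ∨
      (∑ x : Fin 3 × Fin 3,
        if (![Real.log (1/a), Real.log (1/c), Real.log (1/b)] x.1
            - ![Real.log (1/a), Real.log (1/b), Real.log (1/c)] x.1) = w
        then ![a, b, c] x.1 * ![a, c, b] x.2
        else 0)
      / (∑ y : Fin 3 × Fin 3,
        if (![Real.log (1/a), Real.log (1/c), Real.log (1/b)] y.1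
            - ![Real.log (1/a), Real.log (1/c), Real.log (1/b)] y.1) = -w
        then ![a, c, b] y.1 * ![a, c, b] y.2
        else 0)
      ≠ Real.exp ((1 : ℝ) * (w -
          ((-Real.log (∑ s : Fin 3,
              Real.exp (-(1 : ℝ) * ![Real.log (1/a), Real.log (1/c), Real.log (1/b)] s)))
            - (-Real.log (∑ s : Fin 3,
              Real.exp (-(1 : ℝ) * ![Real.log (1/a), Real.log (1/b), Real.log (1/c)] s))))))) := by
  intro w hw
  have hlog : Real.log b ≠ Real.log c := ne_of_lt (Real.log_lt_log hb hbc)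
  by_cases hw0 : w = 0
  · right
    subst hw0
    -- numerator
    have hexp : ∀ x : ℝ, 0 < x → Real.exp (-(1:ℝ) * Real.log (1/x)) = x := by
      intro x hx
      rw [one_div, Real.log_inv]
      simp [Real.exp_log hx]
    have h1 : Real.log (1/c) - Real.log (1/b) ≠ 0 := by
      simp only [one_div, Real.log_inv]
      intro h; apply hlog; linarith [h]
    have h2 : Real.log (1/b) - Real.log (1/c) ≠ 0 := by
      simp only [one_div, Real.log_inv]
      intro h; apply hlog; linarith [h]
    rw [Fintype.sum_prod_type, Fintype.sum_prod_type]
    simp only [Fin.sum_univ_three, Matrix.cons_val_zero, Matrix.cons_val_one,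
      Matrix.head_cons, Matrix.cons_val_two, Matrix.tail_cons, sub_self, neg_zero,
      if_true, h1, h2, if_false, if_neg h1, if_neg h2]
    rw [hexp a ha, hexp b hb, hexp c hc]
    have hsum : a + c + b = 1 := by linarith
    rw [hsum, habc, Real.log_one]
    have : a * a + a * c + a * b + (0+0+0) + (0+0+0) = a := by nlinarith
    rw [this]
    have hden : a * a + a * c + a * b + (c * a + c * c + c * b) + (b * a + b * c + b * b) = 1 := by nlinarith
    rw [hden, div_one]
    have : a < 1 := by linarith
    simp only [neg_zero, sub_zero, sub_self, mul_zero, Real.exp_zero]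
    linarith
  · left
    rw [Fintype.sum_prod_type]
    simp only [sub_self]
    have : (0:ℝ) ≠ -w := by intro h; apply hw0; linarith
    simp [this]
end
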